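/- Assume u_a < 0 and u_b > 0. For every t > 0 and every x with x > max{d, b + √(2 u_b t)}, the approximate velocity u^ε(x,t) tends to 0 and the approximate potential density R^ε(x,t) tends to ρ_d as ε → 0⁺. -/

import Mathlib

open Real Filter Topology

/-- The unnormalized complementary error function `erfc z = ∫_z^∞ e^{-s²} ds`. -/
noncomputable def erfc (z : ℝ) : ℝ := ∫ s in Set.Ioi z, Real.exp (-s ^ 2)

/-- The denominator `D(x,t,ε)` appearing in the Hopf–Cole formulas. -/
noncomputable def D (a b u_a u_b x t ε : ℝ) : ℝ :=
  erfc ((x - a - u_a * t) / Real.sqrt (2 * t * ε))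
      * Real.exp (((x - a - u_a * t) ^ 2 - (x - a) ^ 2) / (2 * t * ε))
    + erfc ((x - b) / Real.sqrt (2 * t * ε))
    - erfc ((x - a) / Real.sqrt (2 * t * ε))
    + erfc (-(x - b) / Real.sqrt (2 * t * ε)) * Real.exp (-u_b / ε)

/-- The approximate velocity `u^ε(x,t)`. -/
noncomputable def uEps (a b u_a u_b x t ε : ℝ) : ℝ :=
  (u_a * erfc ((x - a - u_a * t) / Real.sqrt (2 * t * ε))
        * Real.exp (((x - a - u_a * t) ^ 2 - (x - a) ^ 2) / (2 * t * ε))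
      + ε / Real.sqrt (2 * t * ε) * Real.exp (-(x - b) ^ 2 / (2 * t * ε))
          * (1 - Real.exp (-u_b / ε)))
    / D a b u_a u_b x t ε

/-- The approximate potential density `R^ε(x,t)`. -/
noncomputable def REps (a b c d u_a u_b ρ_c ρ_d x t ε : ℝ) : ℝ :=
  (t * ε / Real.sqrt (2 * t * ε) * ρ_c * Real.exp (-(x - a) ^ 2 / (2 * t * ε))
      + ρ_c * (x - c - u_a * t)
          * Real.exp (((x - a - u_a * t) ^ 2 - (x - a) ^ 2) / (2 * t * ε))
          * erfc ((x - a - u_a * t) / Real.sqrt (2 * t * ε))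
      + t * ε / Real.sqrt (2 * t * ε) * ρ_c
          * (Real.exp (-(x - a) ^ 2 / (2 * t * ε)) - Real.exp (-(x - c) ^ 2 / (2 * t * ε)))
      + ρ_c * (x - c)
          * (erfc ((x - c) / Real.sqrt (2 * t * ε)) - erfc ((x - a) / Real.sqrt (2 * t * ε)))
      + ρ_d * Real.exp (-u_b / ε) * erfc (-(x - d) / Real.sqrt (2 * t * ε)))
    / D a b u_a u_b x t ε

open MeasureTheory

lemma integrable_exp_neg_sq' : Integrable (fun s : ℝ => Real.exp (-s ^ 2)) := by
  have h := integrable_exp_neg_mul_sq (b := (1:ℝ)) one_pos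
  simpa using h

lemma erfc_nonneg (z : ℝ) : 0 ≤ erfc z :=
  MeasureTheory.setIntegral_nonneg measurableSet_Ioi (fun s _ => (Real.exp_pos _).le)

lemma integrable_id_mul_exp_neg_sq : Integrable (fun s : ℝ => s * Real.exp (-s ^ 2)) := by
  apply Integrable.mono' (g := fun s : ℝ => Real.exp (-(1/2) * s ^ 2))
    (integrable_exp_neg_mul_sq (by norm_num))
  · exact (measurable_id.mul (by measurability)).aestronglyMeasurable
  · filter_upwards with s
    rw [Real.norm_eq_abs, abs_mul, abs_of_pos (Real.exp_pos _)]
    have h1 : |s| ≤ Real.exp ((1/2) * s ^ 2) := by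
      have h2 := Real.add_one_le_exp ((1/2) * s ^ 2)
      nlinarith [abs_nonneg s, sq_abs s, sq_nonneg (|s| - 1)]
    calc |s| * Real.exp (-s ^ 2) ≤ Real.exp ((1/2) * s ^ 2) * Real.exp (-s ^ 2) :=
          mul_le_mul_of_nonneg_right h1 (Real.exp_pos _).le
      _ = Real.exp (-(1/2) * s ^ 2) := by rw [← Real.exp_add]; ring_nf

lemma integral_id_mul_exp_neg_sq (z : ℝ) :
    ∫ s in Set.Ioi z, s * Real.exp (-s ^ 2) = Real.exp (-z ^ 2) / 2 := by
  have hd : ∀ s ∈ Set.Ioi z, HasDerivAt (fun u : ℝ => -Real.exp (-u ^ 2) / 2)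
      (s * Real.exp (-s ^ 2)) s := by
    intro s _
    have h1 : HasDerivAt (fun u : ℝ => -u ^ 2) (-(2 * s)) s := by
      simpa using (hasDerivAt_pow 2 s).fun_neg
    have h2 := (h1.exp).fun_neg.div_const 2
    refine h2.congr_deriv ?_
    ring
  have hlim : Tendsto (fun u : ℝ => -Real.exp (-u ^ 2) / 2) atTop (𝓝 0) := by
    have h1 : Tendsto (fun u : ℝ => -u ^ 2) atTop atBot :=
      tendsto_neg_atTop_atBot.comp (tendsto_pow_atTop two_ne_zero)
    have := (Real.tendsto_exp_atBot.comp h1).neg.div_const 2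
    simpa using this
  have := MeasureTheory.integral_Ioi_of_hasDerivAt_of_tendsto
    (Continuous.continuousWithinAt (by continuity)) hd
    integrable_id_mul_exp_neg_sq.integrableOn hlim
  rw [this]; ring

lemma erfc_le {z : ℝ} (hz : 0 < z) : erfc z ≤ Real.exp (-z ^ 2) / (2 * z) := by
  have h1 : erfc z ≤ ∫ s in Set.Ioi z, z⁻¹ * (s * Real.exp (-s ^ 2)) := by
    refine MeasureTheory.setIntegral_mono_on integrable_exp_neg_sq'.integrableOn
      ((integrable_id_mul_exp_neg_sq.const_mul _).integrableOn) measurableSet_Ioi ?_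
    intro s hs
    have hsz : z < s := hs
    have he := Real.exp_pos (-s ^ 2)
    have h2 : 1 ≤ z⁻¹ * s := by
      rw [← div_eq_inv_mul]
      exact (one_le_div hz).2 hsz.le
    nlinarith
  rw [MeasureTheory.integral_const_mul, integral_id_mul_exp_neg_sq] at h1
  calc erfc z ≤ z⁻¹ * (Real.exp (-z ^ 2) / 2) := h1
    _ = Real.exp (-z ^ 2) / (2 * z) := by field_simp

lemma erfc_tendsto_atTop : Tendsto erfc atTop (𝓝 0) := by
  apply tendsto_of_tendsto_of_tendsto_of_le_of_le' tendsto_const_nhds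
    Real.tendsto_exp_neg_atTop_nhds_zero
  · filter_upwards with z using erfc_nonneg z
  · filter_upwards [eventually_ge_atTop (1:ℝ)] with z hz
    have hz0 : (0:ℝ) < z := by linarith
    calc erfc z ≤ Real.exp (-z ^ 2) / (2 * z) := erfc_le hz0
      _ ≤ Real.exp (-z ^ 2) / 1 := by
          apply div_le_div_of_nonneg_left (Real.exp_pos _).le one_pos
          linarith
      _ = Real.exp (-z ^ 2) := div_one _
      _ ≤ Real.exp (-z) := by
          apply Real.exp_le_exp.2
          nlinarith

lemma erfc_neg_eq (z : ℝ) : erfc (-z) = Real.sqrt π - erfc z := by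
  have hrefl : erfc (-z) = ∫ s in Set.Iic z, Real.exp (-s ^ 2) := by
    rw [erfc]
    have := integral_comp_neg_Ioi (-z) (fun s : ℝ => Real.exp (-s ^ 2))
    simp only [neg_neg] at this
    rw [← this]
    congr 1
    funext s
    simp [neg_sq]
  have htot : (∫ s in Set.Iic z, Real.exp (-s ^ 2))
      + ∫ s in Set.Ioi z, Real.exp (-s ^ 2) = Real.sqrt π := by
    rw [intervalIntegral.integral_Iic_add_Ioi integrable_exp_neg_sq'.integrableOn
      integrable_exp_neg_sq'.integrableOn]
    have := integral_gaussian 1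
    simpa using this
  rw [hrefl, erfc] at *
  linarith

lemma erfc_tendsto_atBot : Tendsto erfc atBot (𝓝 (Real.sqrt π)) := by
  have heq : ∀ z : ℝ, Real.sqrt π - erfc (-z) = erfc z := by
    intro z
    have := erfc_neg_eq (-z)
    rw [neg_neg] at this
    linarith
  have h : Tendsto (fun z : ℝ => Real.sqrt π - erfc (-z)) atBot (𝓝 (Real.sqrt π - 0)) :=
    tendsto_const_nhds.sub (erfc_tendsto_atTop.comp tendsto_neg_atBot_atTop)
  rw [sub_zero] at h
  exact h.congr heq

lemma tendsto_exp_const_div {c : ℝ} (hc : c < 0) :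
    Tendsto (fun ε : ℝ => Real.exp (c / ε)) (𝓝[>] (0:ℝ)) (𝓝 0) := by
  have h1 : Tendsto (fun ε : ℝ => c / ε) (𝓝[>] (0:ℝ)) atBot := by
    simpa [div_eq_mul_inv] using (tendsto_const_mul_atBot_of_neg hc).2 tendsto_inv_nhdsGT_zero
  exact Real.tendsto_exp_atBot.comp h1

lemma tendsto_sqrt_eps {t : ℝ} (ht : 0 < t) :
    Tendsto (fun ε : ℝ => Real.sqrt (2 * t * ε)) (𝓝[>] (0:ℝ)) (𝓝[>] 0) := by
  rw [tendsto_nhdsWithin_iff]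
  constructor
  · have h : Tendsto (fun ε : ℝ => Real.sqrt (2 * t * ε)) (𝓝 (0:ℝ)) (𝓝 0) := by
      have hc : Continuous (fun ε : ℝ => Real.sqrt (2 * t * ε)) := by continuity
      have := hc.tendsto 0
      simpa using this
    exact h.mono_left nhdsWithin_le_nhds
  · filter_upwards [self_mem_nhdsWithin] with ε (hε : 0 < ε)
    exact Real.sqrt_pos.2 (by positivity)

lemma small_term (t u_b Z W : ℝ) (ht : 0 < t) (hW : 0 < W) (hWZ : W ≤ Z)
    (hneg : u_b - W ^ 2 / (2 * t) < 0) :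
    Tendsto (fun ε : ℝ => erfc (Z / Real.sqrt (2 * t * ε)) *
        Real.exp ((Z ^ 2 - W ^ 2) / (2 * t * ε)) * Real.exp (u_b / ε))
      (𝓝[>] (0:ℝ)) (𝓝 0) := by
  have hZ : 0 < Z := lt_of_lt_of_le hW hWZ
  have hg : Tendsto (fun ε : ℝ => Real.sqrt (2 * t * ε) / (2 * Z)
      * Real.exp ((u_b - W ^ 2 / (2 * t)) / ε)) (𝓝[>] (0:ℝ)) (𝓝 0) := by
    have h1 := (tendsto_sqrt_eps ht).mono_right nhdsWithin_le_nhds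
    have := (h1.div_const (2 * Z)).mul (tendsto_exp_const_div hneg)
    simpa using this
  apply squeeze_zero_norm' _ hg
  filter_upwards [self_mem_nhdsWithin] with ε (hε : 0 < ε)
  have hσ : 0 < Real.sqrt (2 * t * ε) := Real.sqrt_pos.2 (by positivity)
  have hσsq : Real.sqrt (2 * t * ε) ^ 2 = 2 * t * ε := Real.sq_sqrt (by positivity)
  set σ := Real.sqrt (2 * t * ε) with hσdef
  have hb := erfc_le (z := Z / σ) (by positivity)
  have hnn : (0:ℝ) ≤ erfc (Z / σ) := erfc_nonneg _
  rw [Real.norm_eq_abs, abs_of_nonneg (by positivity)]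
  have hexp : Real.exp (-(Z / σ) ^ 2) * Real.exp ((Z ^ 2 - W ^ 2) / (2 * t * ε))
      * Real.exp (u_b / ε) = Real.exp ((u_b - W ^ 2 / (2 * t)) / ε) := by
    rw [← Real.exp_add, ← Real.exp_add]
    congr 1
    rw [div_pow, hσsq]
    field_simp
    ring
  calc erfc (Z / σ) * Real.exp ((Z ^ 2 - W ^ 2) / (2 * t * ε)) * Real.exp (u_b / ε)
      ≤ Real.exp (-(Z / σ) ^ 2) / (2 * (Z / σ)) * Real.exp ((Z ^ 2 - W ^ 2) / (2 * t * ε))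
          * Real.exp (u_b / ε) :=
        mul_le_mul_of_nonneg_right (mul_le_mul_of_nonneg_right hb (Real.exp_pos _).le)
          (Real.exp_pos _).le
    _ = 1 / (2 * (Z / σ)) * (Real.exp (-(Z / σ) ^ 2)
          * Real.exp ((Z ^ 2 - W ^ 2) / (2 * t * ε)) * Real.exp (u_b / ε)) := by ring
    _ = σ / (2 * Z) * Real.exp ((u_b - W ^ 2 / (2 * t)) / ε) := by
        rw [hexp]
        congr 1
        field_simp

lemma small_gauss (t u_b K : ℝ) (ht : 0 < t) (hneg : u_b - K ^ 2 / (2 * t) < 0) :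
    Tendsto (fun ε : ℝ => Real.exp (-K ^ 2 / (2 * t * ε)) * Real.exp (u_b / ε))
      (𝓝[>] (0:ℝ)) (𝓝 0) := by
  refine Tendsto.congr' ?_ (tendsto_exp_const_div hneg)
  filter_upwards [self_mem_nhdsWithin] with ε (hε : 0 < ε)
  rw [← Real.exp_add]
  congr 1
  field_simp
  ring

/-- Case `u_a < 0`, `u_b > 0`, region `x > max {d, b + √(2·u_b·t)}`: as `ε → 0⁺`, the
approximate velocity tends to `0` and the approximate potential density tends to `ρ_d`. -/

theorem vanishing_viscosity_limit_far_right
    (a b c d u_a u_b ρ_c ρ_d : ℝ) (hac : a < c) (hcb : c < b) (hbd : b < d)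
    (hua : u_a < 0) (hub : 0 < u_b) (t x : ℝ) (ht : 0 < t)
    (hx : max d (b + Real.sqrt (2 * u_b * t)) < x) :
    Tendsto (fun ε : ℝ => uEps a b u_a u_b x t ε) (𝓝[>] 0) (𝓝 0)
    ∧ Tendsto (fun ε : ℝ => REps a b c d u_a u_b ρ_c ρ_d x t ε) (𝓝[>] 0) (𝓝 ρ_d) := by
  have hπ : (0:ℝ) < Real.sqrt π := Real.sqrt_pos.2 Real.pi_pos
  have hxd : d < x := (le_max_left _ _).trans_lt hx
  have hxq : b + Real.sqrt (2 * u_b * t) < x := (le_max_right _ _).trans_lt hx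
  have hq0 : 0 ≤ Real.sqrt (2 * u_b * t) := Real.sqrt_nonneg _
  have hxb : 0 < x - b := by linarith
  have hxc : 0 < x - c := by linarith
  have hxa : 0 < x - a := by linarith
  have huat : u_a * t < 0 := mul_neg_of_neg_of_pos hua ht
  have hkey : ∀ K : ℝ, x - b ≤ K → u_b - K ^ 2 / (2 * t) < 0 := by
    intro K hK
    have h1 : Real.sqrt (2 * u_b * t) < K := by linarith
    have h2 : 2 * u_b * t < K ^ 2 := by
      have h3 := Real.sq_sqrt (by positivity : (0:ℝ) ≤ 2 * u_b * t)
      nlinarith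
    rw [sub_neg, lt_div_iff₀ (by positivity)]
    nlinarith
  -- the shifted erfc term
  have hA := small_term t u_b (x - a - u_a * t) (x - a) ht hxa (by linarith)
    (hkey _ (by linarith))
  -- plain erfc·E terms
  have hplain : ∀ K : ℝ, 0 < K → u_b - K ^ 2 / (2 * t) < 0 →
      Tendsto (fun ε : ℝ => erfc (K / Real.sqrt (2 * t * ε)) * Real.exp (u_b / ε))
        (𝓝[>] (0:ℝ)) (𝓝 0) := by
    intro K hK hneg
    have h := small_term t u_b K K ht hK le_rfl hneg
    simpa using h
  have hB1 := hplain (x - b) hxb (hkey _ le_rfl)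
  have hB2 := hplain (x - a) hxa (hkey _ (by linarith))
  have hB3 := hplain (x - c) hxc (hkey _ (by linarith))
  -- erfc at -∞ terms
  have hC : ∀ K : ℝ, 0 < K →
      Tendsto (fun ε : ℝ => erfc (-K / Real.sqrt (2 * t * ε))) (𝓝[>] (0:ℝ))
        (𝓝 (Real.sqrt π)) := by
    intro K hK
    apply erfc_tendsto_atBot.comp
    have h2 : Tendsto (fun ε : ℝ => (Real.sqrt (2 * t * ε))⁻¹) (𝓝[>] (0:ℝ)) atTop :=
      tendsto_inv_nhdsGT_zero.comp (tendsto_sqrt_eps ht)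
    have h1 : Tendsto (fun ε : ℝ => K / Real.sqrt (2 * t * ε)) (𝓝[>] (0:ℝ)) atTop := by
      have := (tendsto_const_mul_atTop_of_pos hK).2 h2
      simpa [div_eq_mul_inv] using this
    have h3 := tendsto_neg_atTop_atBot.comp h1
    refine h3.congr ?_
    intro ε
    simp [neg_div]
  -- gaussian·E terms
  have hG1 := small_gauss t u_b (x - a) ht (hkey _ (by linarith))
  have hG2 := small_gauss t u_b (x - c) ht (hkey _ (by linarith))
  have hGb := small_gauss t u_b (x - b) ht (hkey _ le_rfl)
  have hEm : Tendsto (fun ε : ℝ => Real.exp (-u_b / ε)) (𝓝[>] (0:ℝ)) (𝓝 0) :=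
    tendsto_exp_const_div (by linarith)
  have h1m : Tendsto (fun ε : ℝ => 1 - Real.exp (-u_b / ε)) (𝓝[>] (0:ℝ)) (𝓝 1) := by
    have := (tendsto_const_nhds (x := (1:ℝ))).sub hEm
    rw [sub_zero] at this
    exact this
  have hσ0 : Tendsto (fun ε : ℝ => Real.sqrt (2 * t * ε)) (𝓝[>] (0:ℝ)) (𝓝 0) :=
    (tendsto_sqrt_eps ht).mono_right nhdsWithin_le_nhds
  have hmulself : ∀ ε : ℝ, 0 < ε →
      Real.sqrt (2 * t * ε) * Real.sqrt (2 * t * ε) = 2 * t * ε := fun ε hε =>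
    Real.mul_self_sqrt (by positivity)
  have hpre : Tendsto (fun ε : ℝ => ε / Real.sqrt (2 * t * ε)) (𝓝[>] (0:ℝ)) (𝓝 0) := by
    refine Tendsto.congr' ?_ (by simpa using hσ0.div_const (2 * t))
    filter_upwards [self_mem_nhdsWithin] with ε (hε : 0 < ε)
    have hσ : 0 < Real.sqrt (2 * t * ε) := Real.sqrt_pos.2 (by positivity)
    rw [div_eq_div_iff (by positivity) hσ.ne']
    rw [hmulself ε hε]
    ring
  have hpret : Tendsto (fun ε : ℝ => t * ε / Real.sqrt (2 * t * ε)) (𝓝[>] (0:ℝ)) (𝓝 0) := by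
    refine Tendsto.congr' ?_ (by simpa using hσ0.div_const 2)
    filter_upwards [self_mem_nhdsWithin] with ε (hε : 0 < ε)
    have hσ : 0 < Real.sqrt (2 * t * ε) := Real.sqrt_pos.2 (by positivity)
    rw [div_eq_div_iff (by positivity) hσ.ne']
    rw [hmulself ε hε]
    ring
  have hkey1 : ∀ ε : ℝ, Real.exp (-u_b / ε) * Real.exp (u_b / ε) = 1 := by
    intro ε
    rw [← Real.exp_add, show -u_b / ε + u_b / ε = 0 by ring, Real.exp_zero]
  -- denominator times E
  have hDE : Tendsto (fun ε : ℝ => D a b u_a u_b x t ε * Real.exp (u_b / ε))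
      (𝓝[>] (0:ℝ)) (𝓝 (Real.sqrt π)) := by
    have h := ((hA.add hB1).sub hB2).add (hC (x - b) hxb)
    rw [show (0:ℝ) + 0 - 0 + Real.sqrt π = Real.sqrt π by ring] at h
    refine Tendsto.congr' ?_ h
    filter_upwards with ε
    unfold D
    linear_combination -erfc (-(x - b) / Real.sqrt (2 * t * ε)) * hkey1 ε
  constructor
  · -- velocity
    have hNu : Tendsto (fun ε : ℝ =>
        (u_a * erfc ((x - a - u_a * t) / Real.sqrt (2 * t * ε))
            * Real.exp (((x - a - u_a * t) ^ 2 - (x - a) ^ 2) / (2 * t * ε))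
          + ε / Real.sqrt (2 * t * ε) * Real.exp (-(x - b) ^ 2 / (2 * t * ε))
              * (1 - Real.exp (-u_b / ε))) * Real.exp (u_b / ε)) (𝓝[>] (0:ℝ)) (𝓝 0) := by
      have h := (hA.const_mul u_a).add ((hpre.mul hGb).mul h1m)
      rw [show u_a * 0 + 0 * 0 * 1 = (0:ℝ) by ring] at h
      refine Tendsto.congr' ?_ h
      filter_upwards with ε
      ring
    have h := hNu.div hDE hπ.ne'
    rw [zero_div] at h
    refine Tendsto.congr' ?_ h
    filter_upwards with ε
    unfold uEps
    exact mul_div_mul_right _ _ (Real.exp_ne_zero _)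
  · -- density
    have hNR : Tendsto (fun ε : ℝ =>
        (t * ε / Real.sqrt (2 * t * ε) * ρ_c * Real.exp (-(x - a) ^ 2 / (2 * t * ε))
          + ρ_c * (x - c - u_a * t)
              * Real.exp (((x - a - u_a * t) ^ 2 - (x - a) ^ 2) / (2 * t * ε))
              * erfc ((x - a - u_a * t) / Real.sqrt (2 * t * ε))
          + t * ε / Real.sqrt (2 * t * ε) * ρ_c
              * (Real.exp (-(x - a) ^ 2 / (2 * t * ε)) - Real.exp (-(x - c) ^ 2 / (2 * t * ε)))
          + ρ_c * (x - c)
              * (erfc ((x - c) / Real.sqrt (2 * t * ε)) - erfc ((x - a) / Real.sqrt (2 * t * ε)))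
          + ρ_d * Real.exp (-u_b / ε) * erfc (-(x - d) / Real.sqrt (2 * t * ε)))
          * Real.exp (u_b / ε)) (𝓝[>] (0:ℝ)) (𝓝 (ρ_d * Real.sqrt π)) := by
      have h := (((((hpret.mul_const ρ_c).mul hG1).add
          (hA.const_mul (ρ_c * (x - c - u_a * t)))).add
          ((hpret.mul_const ρ_c).mul (hG1.sub hG2))).add
          ((hB3.sub hB2).const_mul (ρ_c * (x - c)))).add
          ((hC (x - d) (by linarith)).const_mul ρ_d)
      rw [show 0 * ρ_c * 0 + ρ_c * (x - c - u_a * t) * 0 + 0 * ρ_c * (0 - 0)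
          + ρ_c * (x - c) * (0 - 0) + ρ_d * Real.sqrt π = ρ_d * Real.sqrt π by ring] at h
      refine Tendsto.congr' ?_ h
      filter_upwards with ε
      linear_combination -ρ_d * erfc (-(x - d) / Real.sqrt (2 * t * ε)) * hkey1 ε
    have h := hNR.div hDE hπ.ne'
    rw [show ρ_d * Real.sqrt π / Real.sqrt π = ρ_d from
      mul_div_cancel_right₀ ρ_d hπ.ne'] at h
    refine Tendsto.congr' ?_ h
    filter_upwards with ε
    unfold REps
    exact mul_div_mul_right _ _ (Real.exp_ne_zero _)
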